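/- arXiv:0912.1068 — 2 statements merged into one kernel-verified Lean document; each statement's English description precedes it below -/
import Mathlib

section
/- Let d be a positive integer, k ∈ ℚ with k ≥ 2, and t ∈ ℝ. Assume that every rational polytope Q ⊂ ℝ^d of dimension d all of whose edges have lattice length strictly greater than t is k-convex-normal. Then every rational polytope P ⊂ ℝ^d of dimension d all of whose edges have lattice length at least t is k-convex-normal. -/
open Set Metric Pointwise

noncomputable section

/-- Points of the Euclidean space `ℝ^d`. -/
abbrev Pt (d : ℕ) : Type := EuclideanSpace ℝ (Fin d)

/-- `x` is a point of the standard lattice `ℤ^d ⊂ ℝ^d`. -/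
def IsLatticePt {d : ℕ} (x : Pt d) : Prop := ∀ i, ∃ n : ℤ, x i = (n : ℝ)

/-- `x` has rational coordinates. -/
def IsRatPt {d : ℕ} (x : Pt d) : Prop := ∀ i, ∃ q : ℚ, x i = (q : ℝ)

/-- `P` is a polytope with rational vertices. -/
def IsRationalPolytope {d : ℕ} (P : Set (Pt d)) : Prop :=
  ∃ V : Finset (Pt d), (∀ v ∈ V, IsRatPt v) ∧ P = convexHull ℝ (V : Set (Pt d))

/-- `P` is a polytope with integral vertices. -/
def IsLatticePolytope {d : ℕ} (P : Set (Pt d)) : Prop :=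
  ∃ V : Finset (Pt d), (∀ v ∈ V, IsLatticePt v) ∧ P = convexHull ℝ (V : Set (Pt d))

/-- The (affine) dimension of a set. -/
def polyDim {d : ℕ} (P : Set (Pt d)) : ℕ := Module.finrank ℝ (vectorSpan ℝ P)

/-- An integer vector is primitive if its components are coprime. -/
def IsPrimitive {d : ℕ} (u : Fin d → ℤ) : Prop := Finset.univ.gcd u = 1

/-- The segment `[v, w]` has lattice length at least `lb`: whenever `w - v = t • u` with
`u` a primitive integer vector and `t > 0`, one has `t ≥ lb`. -/
def LatLenGE {d : ℕ} (v w : Pt d) (lb : ℝ) : Prop :=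
  ∀ (u : Fin d → ℤ) (t : ℝ), 0 < t → IsPrimitive u →
    (∀ i, w i - v i = t * (u i : ℝ)) → lb ≤ t

/-- The segment `[v, w]` has lattice length greater than `lb`. -/
def LatLenGT {d : ℕ} (v w : Pt d) (lb : ℝ) : Prop :=
  ∀ (u : Fin d → ℤ) (t : ℝ), 0 < t → IsPrimitive u →
    (∀ i, w i - v i = t * (u i : ℝ)) → lb < t

/-- `[v, w]` is an edge (a one-dimensional face) of `P`. -/
def IsEdge {d : ℕ} (P : Set (Pt d)) (v w : Pt d) : Prop :=
  v ≠ w ∧ IsExtreme ℝ P (segment ℝ v w)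

/-- Every edge of `P` has lattice length at least `lb`. -/
def EdgeLengthsGE {d : ℕ} (P : Set (Pt d)) (lb : ℝ) : Prop :=
  ∀ v w, IsEdge P v w → LatLenGE v w lb

/-- Every edge of `P` has lattice length greater than `lb`. -/
def EdgeLengthsGT {d : ℕ} (P : Set (Pt d)) (lb : ℝ) : Prop :=
  ∀ v w, IsEdge P v w → LatLenGT v w lb

/-- The union `⋃ (x + P)` over all vertices `v` of `P` and all
`x ∈ (c-1)P ∩ ((c-1)v + ℤ^d)`. -/
def cnUnion {d : ℕ} (P : Set (Pt d)) (c : ℝ) : Set (Pt d) :=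
  {y | ∃ v ∈ Set.extremePoints ℝ P, ∃ x ∈ (c - 1) • P,
    IsLatticePt (x - (c - 1) • v) ∧ ∃ p ∈ P, y = x + p}

/-- `P` is `k`-convex-normal: `CN(d,k)`. -/
def ConvexNormal {d : ℕ} (k : ℚ) (P : Set (Pt d)) : Prop :=
  ∀ c : ℚ, 2 ≤ c → c ≤ k → (c : ℝ) • P = cnUnion P (c : ℝ)

/-- `P` is integrally closed. -/
def IntegrallyClosed {d : ℕ} (P : Set (Pt d)) : Prop :=
  ∀ c : ℕ, 0 < c → ∀ z ∈ (c : ℝ) • P, IsLatticePt z →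
    ∃ x : Fin c → Pt d, (∀ i, x i ∈ P ∧ IsLatticePt (x i)) ∧ ∑ i, x i = z

/-- A face of a polytope: a closed convex extreme subset. -/
def IsFaceOf {d : ℕ} (P F : Set (Pt d)) : Prop :=
  IsExtreme ℝ P F ∧ Convex ℝ F ∧ IsClosed F

/-- A facet: a face of codimension one. -/
def IsFacetOf {d : ℕ} (P F : Set (Pt d)) : Prop :=
  IsFaceOf P F ∧ polyDim F + 1 = polyDim P

/-- `width_F(P)`: the maximum over vertices `v` of `P` of `dist(v, aff F)`. -/
def facetWidth {d : ℕ} (P F : Set (Pt d)) : ℝ :=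
  sSup ((fun v => infDist v ((affineSpan ℝ F : AffineSubspace ℝ (Pt d)) : Set (Pt d))) ''
    Set.extremePoints ℝ P)

/-- `U_P(F, ε)`: the `ε`-layer of `P` along (the affine hull of) `F`. -/
def layer {d : ℕ} (P F : Set (Pt d)) (ε : ℝ) : Set (Pt d) :=
  {x ∈ P | infDist x ((affineSpan ℝ F : AffineSubspace ℝ (Pt d)) : Set (Pt d)) ≤ ε}

/-- `P` is `k`-boundary-convex-normal: `BCN(d,k)`. -/
def BCN {d : ℕ} (k : ℚ) (P : Set (Pt d)) : Prop :=
  ∀ F, IsFacetOf P F → ∀ c : ℚ, 2 ≤ c → c ≤ k →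
    layer ((c : ℝ) • P) ((c : ℝ) • F) (facetWidth P F / ((d : ℝ) + 1)) ⊆ cnUnion P (c : ℝ)

/-- The parallelepiped `z + {Σ λᵢ • wᵢ : 0 ≤ λᵢ ≤ 1}`. -/
def Parallelepiped {d m : ℕ} (z : Pt d) (w : Fin m → Pt d) : Set (Pt d) :=
  {x | ∃ lam : Fin m → ℝ, (∀ i, lam i ∈ Icc (0 : ℝ) 1) ∧ x = z + ∑ i, lam i • w i}

/-- `L` is a full-dimensional lattice parallelepiped. -/
def IsLatticeParallelepiped {d : ℕ} (L : Set (Pt d)) : Prop :=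
  ∃ (z : Pt d) (w : Fin d → Pt d), IsLatticePt z ∧ (∀ i, IsLatticePt (w i)) ∧
    LinearIndependent ℝ w ∧ L = Parallelepiped z w


namespace Statement16Aux

variable {d : ℕ}

lemma smul_segment' (r : ℝ) (v w : Pt d) :
    r • segment ℝ v w = segment ℝ (r • v) (r • w) := by
  have := image_segment ℝ ((DistribMulAction.toLinearMap ℝ (Pt d) r).toAffineMap) v w
  exact this

lemma smul_openSegment' (r : ℝ) (v w : Pt d) :
    r • openSegment ℝ v w = openSegment ℝ (r • v) (r • w) := by
  have := image_openSegment ℝ ((DistribMulAction.toLinearMap ℝ (Pt d) r).toAffineMap) v w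
  exact this

lemma _root_.IsExtreme.smul_set' {r : ℝ} (hr : r ≠ 0) {A B : Set (Pt d)} (h : IsExtreme ℝ A B) :
    IsExtreme ℝ (r • A) (r • B) := by
  constructor
  · exact Set.smul_set_mono h.1
  · rintro x₁ ⟨a₁, ha₁, rfl⟩ x₂ ⟨a₂, ha₂, rfl⟩ x ⟨b, hb, rfl⟩ hx
    rw [← smul_openSegment'] at hx
    obtain ⟨b', hb', hbb⟩ := hx
    have hb'b : b' = b := smul_right_injective _ hr hbb
    subst hb'b
    have h1 := h.2 ha₁ ha₂ hb hb'
    exact Set.smul_mem_smul_set h1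

lemma extremePoints_smul_mem {r : ℝ} (hr : r ≠ 0) {A : Set (Pt d)} {x : Pt d}
    (h : x ∈ Set.extremePoints ℝ A) : r • x ∈ Set.extremePoints ℝ (r • A) := by
  rw [← isExtreme_singleton] at h ⊢
  simpa [Set.smul_set_singleton] using h.smul_set' hr

lemma span_smul_set (r : ℝ) (hr : r ≠ 0) (S : Set (Pt d)) :
    Submodule.span ℝ (r • S) = Submodule.span ℝ S := by
  apply le_antisymm
  · rw [Submodule.span_le]
    rintro _ ⟨s, hs, rfl⟩
    exact Submodule.smul_mem _ _ (Submodule.subset_span hs)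
  · rw [Submodule.span_le]
    intro s hs
    have h : s = r⁻¹ • (r • s) := by rw [smul_smul, inv_mul_cancel₀ hr, one_smul]
    rw [h]
    exact Submodule.smul_mem _ _ (Submodule.subset_span (Set.smul_mem_smul_set hs))

lemma polyDim_smul {r : ℝ} (hr : r ≠ 0) (P : Set (Pt d)) :
    polyDim (r • P) = polyDim P := by
  have hset : (r • P) -ᵥ (r • P) = r • (P -ᵥ P) := by
    ext x
    constructor
    · rintro ⟨_, ⟨a, ha, rfl⟩, _, ⟨b, hb, rfl⟩, rfl⟩
      exact ⟨a - b, ⟨a, ha, b, hb, rfl⟩, by simp [smul_sub]⟩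
    · rintro ⟨_, ⟨a, ha, b, hb, rfl⟩, rfl⟩
      exact ⟨r • a, ⟨a, ha, rfl⟩, r • b, ⟨b, hb, rfl⟩, by simp [smul_sub]⟩
  unfold polyDim vectorSpan
  rw [hset, span_smul_set r hr]

lemma abs_coord_le (z : Pt d) (i : Fin d) : |z i| ≤ ‖z‖ := by
  rw [EuclideanSpace.norm_eq]
  calc |z i| = Real.sqrt (‖z i‖ ^ 2) := by
        rw [Real.norm_eq_abs, Real.sqrt_sq (abs_nonneg _)]
  _ ≤ Real.sqrt (∑ j, ‖z j‖ ^ 2) := Real.sqrt_le_sqrt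
      (Finset.single_le_sum (f := fun j => ‖z j‖ ^ 2) (fun j _ => sq_nonneg _)
        (Finset.mem_univ i))

lemma finite_lattice_ball (R : ℝ) :
    {z : Pt d | IsLatticePt z ∧ ‖z‖ ≤ R}.Finite := by
  classical
  have key : {z : Pt d | IsLatticePt z ∧ ‖z‖ ≤ R} ⊆
      (fun n : Fin d → ℤ => (WithLp.toLp 2 (fun i => (n i : ℝ)) : Pt d)) ''
        (Set.pi Set.univ (fun _ : Fin d => Set.Icc (-⌈R⌉) ⌈R⌉)) := by
    rintro z ⟨hz, hR⟩
    choose n hn using hz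
    refine ⟨n, fun i _ => ?_, ?_⟩
    · have hzi : |z i| ≤ R := (abs_coord_le z i).trans hR
      rw [hn i] at hzi
      have h1 : (n i : ℝ) ≤ ⌈R⌉ := (le_abs_self _).trans (hzi.trans (Int.le_ceil R))
      have h2 : -(⌈R⌉ : ℝ) ≤ (n i : ℝ) := by
        have := neg_abs_le ((n i : ℝ))
        have h3 : -(⌈R⌉:ℝ) ≤ -|(n i : ℝ)| := neg_le_neg (hzi.trans (Int.le_ceil R))
        linarith
      exact ⟨by exact_mod_cast h2, by exact_mod_cast h1⟩
    · ext i
      exact (hn i).symm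
  exact Set.Finite.subset (Set.Finite.image _ (Set.Finite.pi fun _ => Set.finite_Icc _ _)) key

end Statement16Aux

open Statement16Aux

set_option maxHeartbeats 1000000 in
/-- Lemma 6.1. If every rational `d`-polytope with edges of lattice length
strictly greater than `t` is `k`-convex-normal, then so is every rational `d`-polytope with
edges of lattice length at least `t`. -/
theorem statement16 (d : ℕ) (hd : 0 < d) (k : ℚ) (hk : 2 ≤ k) (t : ℝ)
    (hyp : ∀ Q : Set (Pt d), IsRationalPolytope Q → polyDim Q = d →
      EdgeLengthsGT Q t → ConvexNormal k Q) :
    ∀ P : Set (Pt d), IsRationalPolytope P → polyDim P = d →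
      EdgeLengthsGE P t → ConvexNormal k P := by
  classical
  rintro P ⟨V, hVrat, hPV⟩ hPdim hEdge c hc2 hck
  set cR : ℝ := (c : ℝ) with hcR
  have hc2R : (2:ℝ) ≤ cR := by rw [hcR]; exact_mod_cast hc2
  have hcpos : 0 < cR - 1 := by linarith
  have hcne : cR - 1 ≠ 0 := ne_of_gt hcpos
  have hcRne : cR ≠ 0 := by positivity
  have hPconv : Convex ℝ P := hPV ▸ convex_convexHull ℝ _
  have hPcompact : IsCompact P := hPV ▸ V.finite_toSet.isCompact_convexHull ℝ
  have hPclosed : IsClosed P := hPcompact.isClosed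
  -- the rationals s n = 1 + 1/(n+1)
  set sQ : ℕ → ℚ := fun n => 1 + 1/(n+1) with hsQ
  set sR : ℕ → ℝ := fun n => ((sQ n : ℚ) : ℝ) with hsR
  have hsval : ∀ n, sR n = 1 + 1/((n:ℝ)+1) := by
    intro n
    rw [hsR, hsQ]
    push_cast
    ring
  have hs1 : ∀ n, 1 < sR n := by
    intro n
    rw [hsval n]
    have : 0 < 1/((n:ℝ)+1) := by positivity
    linarith
  have hspos : ∀ n, 0 < sR n := fun n => lt_trans one_pos (hs1 n)
  have hs0 : ∀ n, sR n ≠ 0 := fun n => ne_of_gt (hspos n)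
  have hs2 : ∀ n, sR n ≤ 2 := by
    intro n
    rw [hsval n]
    have h0 : (0:ℝ) ≤ (n:ℝ) := Nat.cast_nonneg n
    have h2 : 1/((n:ℝ)+1) ≤ 1 := by
      rw [div_le_one (by linarith)]
      linarith
    linarith
  -- bounding ball for P
  obtain ⟨R₀, hR₀⟩ := hPcompact.isBounded.subset_closedBall 0
  set R : ℝ := max R₀ 0 with hRdef
  have hR0 : 0 ≤ R := le_max_right _ _
  have hPball : ∀ p ∈ P, ‖p‖ ≤ R := by
    intro p hp
    have := hR₀ hp
    rw [mem_closedBall_zero_iff] at this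
    exact this.trans (le_max_left _ _)
  -- the scaled polytopes are rational, full-dimensional, with long edges
  have hQrat : ∀ n, IsRationalPolytope (sR n • P) := by
    intro n
    refine ⟨V.image (fun x => sR n • x), ?_, ?_⟩
    · intro w hw
      simp only [Finset.mem_image] at hw
      obtain ⟨x, hx, rfl⟩ := hw
      intro i
      obtain ⟨q, hq⟩ := hVrat x hx i
      refine ⟨sQ n * q, ?_⟩
      have : (sR n • x) i = sR n * x i := rfl
      rw [this, hq, hsR]
      push_cast
      ring
    · rw [Finset.coe_image, Set.image_smul, convexHull_smul, ← hPV]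
  have hQdim : ∀ n, polyDim (sR n • P) = d := by
    intro n
    rw [polyDim_smul (hs0 n) P, hPdim]
  have hQedge : ∀ n, EdgeLengthsGT (sR n • P) t := by
    intro n v w hvw u t' ht' hu hco
    have hr0 : (sR n)⁻¹ ≠ 0 := inv_ne_zero (hs0 n)
    have hedgeP : IsEdge P ((sR n)⁻¹ • v) ((sR n)⁻¹ • w) := by
      constructor
      · intro hvw'
        exact hvw.1 (smul_right_injective _ hr0 hvw')
      · have h2 := hvw.2.smul_set' hr0
        rw [smul_segment', inv_smul_smul₀ (hs0 n)] at h2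
        exact h2
    have hge := hEdge _ _ hedgeP u ((sR n)⁻¹ * t')
      (mul_pos (inv_pos.mpr (hspos n)) ht') hu ?side
    case side =>
      intro i
      have h := hco i
      have hw' : ((sR n)⁻¹ • w) i = (sR n)⁻¹ * w i := rfl
      have hv' : ((sR n)⁻¹ • v) i = (sR n)⁻¹ * v i := rfl
      rw [hw', hv', ← mul_sub, h]
      ring
    have hinv1 : (sR n)⁻¹ < 1 := by
      rw [inv_lt_one_iff₀]
      right
      exact hs1 n
    have hlt : (sR n)⁻¹ * t' < t' := by nlinarith
    exact lt_of_le_of_lt hge hlt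
  -- easy inclusion: cnUnion ⊆ cR • P
  apply Set.Subset.antisymm
  · -- hard inclusion
    intro y hy
    -- key existence for each n
    have key : ∀ n : ℕ, ∃ vz : Pt d × Pt d,
        (vz.1 ∈ (V : Set (Pt d)) ∧ IsLatticePt vz.2 ∧ ‖vz.2‖ ≤ 4*(cR-1)*R) ∧
        vz.1 ∈ Set.extremePoints ℝ P ∧
        (∃ q ∈ P, vz.2 + ((cR-1) * sR n) • vz.1 = ((cR-1) * sR n) • q) ∧
        (∃ q ∈ P, sR n • y - (vz.2 + ((cR-1) * sR n) • vz.1) = sR n • q) := by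
      intro n
      have hcn := hyp (sR n • P) (hQrat n) (hQdim n) (hQedge n) c hc2 hck
      obtain ⟨q0, hq0, hq0e⟩ := hy
      have hyn : sR n • y ∈ cnUnion (sR n • P) cR := by
        rw [← hcn]
        exact ⟨sR n • q0, Set.smul_mem_smul_set hq0, by rw [← hq0e, smul_comm]⟩
      obtain ⟨vn, hvn, xn, hxn, hlat, pn, hpn, hyne⟩ := hyn
      set wv : Pt d := (sR n)⁻¹ • vn with hwv
      have hwv_ext : wv ∈ Set.extremePoints ℝ P := by
        have h := extremePoints_smul_mem (inv_ne_zero (hs0 n)) hvn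
        rwa [inv_smul_smul₀ (hs0 n)] at h
      have hwvV : wv ∈ (V : Set (Pt d)) :=
        extremePoints_convexHull_subset (hPV ▸ hwv_ext)
      have hvnwv : vn = sR n • wv := (smul_inv_smul₀ (hs0 n) vn).symm
      have hxn' : xn ∈ ((cR-1) * sR n) • P := by
        rw [mul_smul]
        exact hxn
      obtain ⟨qx, hqx, hqxe0⟩ := hxn'
      obtain ⟨qp, hqp, hqpe0⟩ := hpn
      have hqxe : ((cR-1) * sR n) • qx = xn := hqxe0
      have hqpe : sR n • qp = pn := hqpe0
      have hxs : xn - (cR-1) • vn + ((cR-1) * sR n) • wv = xn := by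
        rw [mul_smul, ← hvnwv]
        abel
      have h4 : xn - (cR-1) • vn + ((cR-1) * sR n) • wv = ((cR-1) * sR n) • qx := by
        rw [hxs, ← hqxe]
      have h5 : sR n • y - (xn - (cR-1) • vn + ((cR-1) * sR n) • wv) = sR n • qp := by
        rw [hxs, hyne, ← hqpe]
        abel
      have hwvP : wv ∈ P := extremePoints_subset hwv_ext
      have hnx : ‖xn‖ ≤ (cR-1) * (2*R) := by
        rw [← hqxe, norm_smul, Real.norm_eq_abs,
          abs_of_pos (mul_pos hcpos (hspos n))]
        have h1 : ‖qx‖ ≤ R := hPball qx hqx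
        have h2 := hs2 n
        calc (cR-1) * sR n * ‖qx‖ = (cR-1) * (sR n * ‖qx‖) := by ring
          _ ≤ (cR-1) * (2*R) := by
              apply mul_le_mul_of_nonneg_left _ hcpos.le
              exact mul_le_mul h2 h1 (norm_nonneg _) (by norm_num)
      have hnv : ‖vn‖ ≤ 2*R := by
        rw [hvnwv, norm_smul, Real.norm_eq_abs, abs_of_pos (hspos n)]
        have h1 : ‖wv‖ ≤ R := hPball wv hwvP
        have h2 := hs2 n
        calc sR n * ‖wv‖ ≤ 2 * R := mul_le_mul h2 h1 (norm_nonneg _) (by norm_num)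
          _ = 2*R := by ring
      have hnorm : ‖xn - (cR-1) • vn‖ ≤ 4*(cR-1)*R := by
        have h1 : ‖xn - (cR-1) • vn‖ ≤ ‖xn‖ + ‖(cR-1) • vn‖ := norm_sub_le _ _
        have h2 : ‖(cR-1) • vn‖ = (cR-1) * ‖vn‖ := by
          rw [norm_smul, Real.norm_eq_abs, abs_of_pos hcpos]
        nlinarith [norm_nonneg vn]
      exact ⟨(wv, xn - (cR-1) • vn), ⟨hwvV, hlat, hnorm⟩, hwv_ext,
        ⟨qx, hqx, h4⟩, ⟨qp, hqp, h5⟩⟩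
    -- pigeonhole over the finite set of (vertex, lattice point) pairs
    choose f hfT hfE hf4 hf5 using key
    set T : Set (Pt d × Pt d) :=
      {vz : Pt d × Pt d | vz.1 ∈ (V : Set (Pt d)) ∧ IsLatticePt vz.2 ∧
        ‖vz.2‖ ≤ 4*(cR-1)*R} with hT
    have hTfin : T.Finite := by
      have hsub : T ⊆ (V : Set (Pt d)) ×ˢ
          {z : Pt d | IsLatticePt z ∧ ‖z‖ ≤ 4*(cR-1)*R} :=
        fun vz h => ⟨h.1, h.2.1, h.2.2⟩
      exact (V.finite_toSet.prod (finite_lattice_ball _)).subset hsub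
    haveI := hTfin.to_subtype
    obtain ⟨⟨vz, hvzT⟩, hfib⟩ := Finite.exists_infinite_fiber
      (fun n : ℕ => (⟨f n, hfT n⟩ : T))
    have hNinf : Set.Infinite ((fun n : ℕ => (⟨f n, hfT n⟩ : T)) ⁻¹' {⟨vz, hvzT⟩}) :=
      Set.infinite_coe_iff.mp hfib
    choose g hgN hggt using hNinf.exists_gt
    have hfg : ∀ m, f (g m) = vz := fun m => congrArg Subtype.val (hgN m)
    have hvext : vz.1 ∈ Set.extremePoints ℝ P := by
      have h := hfE (g 0); rw [hfg 0] at h; exact h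
    have hzlat : IsLatticePt vz.2 := by
      have h := (hfT (g 0)).2.1; rw [hfg 0] at h; exact h
    set v : Pt d := vz.1 with hvd
    set z : Pt d := vz.2 with hzd
    -- the scalars converge to 1
    set σ : ℕ → ℝ := fun m => sR (g m) with hσd
    have hσ1 : ∀ m, 1 ≤ σ m := fun m => (hs1 _).le
    have hσub : ∀ m, σ m ≤ 1 + 1/((m:ℝ)+1) := by
      intro m
      rw [hσd]
      simp only []
      rw [hsval]
      have hmg : (m:ℝ) < (g m : ℝ) := by exact_mod_cast hggt m
      have hle : 1/((g m:ℝ)+1) ≤ 1/((m:ℝ)+1) :=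
        one_div_le_one_div_of_le (by positivity) (by linarith)
      linarith
    have hσlim : Filter.Tendsto σ Filter.atTop (nhds 1) := by
      have hupper : Filter.Tendsto (fun m : ℕ => 1 + 1/((m:ℝ)+1)) Filter.atTop (nhds 1) := by
        have h0 := tendsto_one_div_add_atTop_nhds_zero_nat (𝕜 := ℝ)
        simpa using (tendsto_const_nhds (x := (1:ℝ))).add h0
      exact tendsto_of_tendsto_of_tendsto_of_le_of_le tendsto_const_nhds hupper hσ1 hσub
    have h4 : ∀ m, ∃ q ∈ P, z + ((cR-1) * σ m) • v = ((cR-1) * σ m) • q := by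
      intro m; have h := hf4 (g m); rw [hfg m] at h; exact h
    have h5 : ∀ m, ∃ q ∈ P, σ m • y - (z + ((cR-1) * σ m) • v) = σ m • q := by
      intro m; have h := hf5 (g m); rw [hfg m] at h; exact h
    choose a ha hae using h4
    choose b hb hbe using h5
    have hμpos : ∀ m, 0 < (cR-1) * σ m := fun m => mul_pos hcpos (hspos _)
    have hμlim : Filter.Tendsto (fun m => (cR-1) * σ m) Filter.atTop (nhds (cR-1)) := by
      have h := (tendsto_const_nhds (x := cR-1)).mul hσlim
      simpa using h
    have hveclim : Filter.Tendsto (fun m => z + ((cR-1) * σ m) • v) Filter.atTop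
        (nhds (z + (cR-1) • v)) :=
      (tendsto_const_nhds (x := z)).add (hμlim.smul (tendsto_const_nhds (x := v)))
    have haform : ∀ m, a m = ((cR-1) * σ m)⁻¹ • (z + ((cR-1) * σ m) • v) := by
      intro m
      rw [hae m, inv_smul_smul₀ (ne_of_gt (hμpos m))]
    have halim : Filter.Tendsto a Filter.atTop (nhds ((cR-1)⁻¹ • (z + (cR-1) • v))) := by
      have h := (hμlim.inv₀ hcne).smul hveclim
      exact (Filter.tendsto_congr haform).mpr h
    have haP : (cR-1)⁻¹ • (z + (cR-1) • v) ∈ P :=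
      hPclosed.mem_of_tendsto halim (Filter.Eventually.of_forall ha)
    have hbform : ∀ m, b m = (σ m)⁻¹ • (σ m • y - (z + ((cR-1) * σ m) • v)) := by
      intro m
      rw [hbe m, inv_smul_smul₀ (hs0 _)]
    have hblim : Filter.Tendsto b Filter.atTop (nhds (y - (z + (cR-1) • v))) := by
      have h := (hσlim.inv₀ one_ne_zero).smul
        ((hσlim.smul (tendsto_const_nhds (x := y))).sub hveclim)
      have h2 := (Filter.tendsto_congr hbform).mpr h
      simpa using h2
    have hbP : y - (z + (cR-1) • v) ∈ P :=
      hPclosed.mem_of_tendsto hblim (Filter.Eventually.of_forall hb)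
    refine ⟨v, hvext, z + (cR-1) • v,
      ⟨(cR-1)⁻¹ • (z + (cR-1) • v), haP, smul_inv_smul₀ hcne _⟩, ?_,
      y - (z + (cR-1) • v), hbP, by abel⟩
    simpa using hzlat
  · rintro y ⟨v, hv, x, hx, hlz, p, hp, rfl⟩
    obtain ⟨a, ha, rfl⟩ := hx
    refine ⟨((cR-1)/cR) • a + (1/cR) • p,
      hPconv ha hp (by positivity) (by positivity) (by field_simp; ring), ?_⟩
    show cR • (((cR-1)/cR) • a + (1/cR) • p) = (cR-1) • a + p
    rw [smul_add, smul_smul, smul_smul]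
    have e1 : cR * ((cR-1)/cR) = cR - 1 := by field_simp
    have e2 : cR * (1/cR) = 1 := by field_simp
    rw [e1, e2, one_smul]
end
end

section
/- Let d be a positive integer and l ∈ ℚ. Assume that every rational polytope Q ⊂ ℝ^d of dimension d all of whose edges have lattice length at least l is 4-convex-normal. Then every lattice polytope P ⊂ ℝ^d of dimension d all of whose edges have lattice length at least l is integrally closed. -/
open Set Metric Pointwise

noncomputable section

namespace Stmt17Aux

variable {d : ℕ}

lemma latt_add {a b : Pt d} (ha : IsLatticePt a) (hb : IsLatticePt b) :
    IsLatticePt (a + b) := by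
  intro i
  obtain ⟨n, hn⟩ := ha i
  obtain ⟨m, hm⟩ := hb i
  exact ⟨n + m, by push_cast; simp [hn, hm]⟩

lemma latt_sub {a b : Pt d} (ha : IsLatticePt a) (hb : IsLatticePt b) :
    IsLatticePt (a - b) := by
  intro i
  obtain ⟨n, hn⟩ := ha i
  obtain ⟨m, hm⟩ := hb i
  exact ⟨n - m, by push_cast; simp [hn, hm]⟩

lemma latt_nsmul (n : ℕ) {v : Pt d} (hv : IsLatticePt v) :
    IsLatticePt ((n : ℝ) • v) := by
  intro i
  obtain ⟨m, hm⟩ := hv i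
  refine ⟨n * m, ?_⟩
  rw [PiLp.smul_apply, hm]
  push_cast
  rw [smul_eq_mul]

lemma smul_openSegment' (a : ℝ) {x y z : Pt d} (h : z ∈ openSegment ℝ x y) :
    a • z ∈ openSegment ℝ (a • x) (a • y) := by
  obtain ⟨s, t, hs, ht, hst, rfl⟩ := h
  exact ⟨s, t, hs, ht, hst, by
    rw [smul_add, smul_comm a s, smul_comm a t]⟩

lemma isExtreme_smul {a : ℝ} (ha : a ≠ 0) {A B : Set (Pt d)} (h : IsExtreme ℝ A B) :
    IsExtreme ℝ (a • A) (a • B) := by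
  constructor
  · exact Set.smul_set_mono h.1
  · rintro x1 ⟨y1, hy1, rfl⟩ x2 ⟨y2, hy2, rfl⟩ x ⟨y, hy, rfl⟩ hseg
    have hy' : y ∈ openSegment ℝ y1 y2 := by
      have := smul_openSegment' a⁻¹ hseg
      simpa [inv_smul_smul₀ ha] using this
    exact Set.smul_mem_smul_set (h.2 hy1 hy2 hy hy')

lemma smul_segment' (a : ℝ) (v w : Pt d) :
    a • segment ℝ v w = segment ℝ (a • v) (a • w) := by
  have := image_segment ℝ ((LinearMap.lsmul ℝ (Pt d) a).toAffineMap) v w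
  simp at this
  exact this

lemma mem_extremePoints_smul {a : ℝ} (ha : a ≠ 0) {s : Set (Pt d)} {v : Pt d}
    (hv : v ∈ Set.extremePoints ℝ (a • s)) : a⁻¹ • v ∈ Set.extremePoints ℝ s := by
  obtain ⟨hvmem, hext⟩ := hv
  obtain ⟨w, hw, rfl⟩ := hvmem
  rw [inv_smul_smul₀ ha]
  refine ⟨hw, fun x1 hx1 x2 hx2 hseg => ?_⟩
  exact smul_right_injective (Pt d) ha (hext (Set.smul_mem_smul_set hx1)
    (Set.smul_mem_smul_set hx2) (smul_openSegment' a hseg))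

lemma vectorSpan_smul {a : ℝ} (ha : a ≠ 0) (s : Set (Pt d)) :
    vectorSpan ℝ (a • s) = vectorSpan ℝ s := by
  rw [vectorSpan_def, vectorSpan_def]
  refine le_antisymm (Submodule.span_le.2 ?_) (Submodule.span_le.2 ?_)
  · rintro x ⟨y, ⟨u, hu, rfl⟩, z, ⟨w, hw, rfl⟩, rfl⟩
    show a • u - a • w ∈ (Submodule.span ℝ (s -ᵥ s) : Set (Pt d))
    rw [← smul_sub]
    exact Submodule.smul_mem _ a (Submodule.subset_span (Set.vsub_mem_vsub hu hw))
  · rintro x ⟨u, hu, w, hw, rfl⟩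
    show u - w ∈ (Submodule.span ℝ ((a • s) -ᵥ (a • s)) : Set (Pt d))
    have h : u - w = a⁻¹ • (a • u - a • w) := by
      rw [← smul_sub, inv_smul_smul₀ ha]
    rw [h]
    exact Submodule.smul_mem _ a⁻¹ (Submodule.subset_span
      (Set.vsub_mem_vsub (Set.smul_mem_smul_set hu) (Set.smul_mem_smul_set hw)))

def Decomp (P : Set (Pt d)) (m : ℕ) (z : Pt d) : Prop :=
  ∃ x : Fin m → Pt d, (∀ i, x i ∈ P ∧ IsLatticePt (x i)) ∧ ∑ i, x i = z

lemma Decomp.add {P : Set (Pt d)} {a b : ℕ} {z1 z2 : Pt d}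
    (h1 : Decomp P a z1) (h2 : Decomp P b z2) : Decomp P (a + b) (z1 + z2) := by
  obtain ⟨x, hx, hxs⟩ := h1
  obtain ⟨y, hy, hys⟩ := h2
  refine ⟨Fin.addCases x y, fun i => ?_, ?_⟩
  · refine Fin.addCases (fun i => ?_) (fun i => ?_) i
    · simpa using hx i
    · simpa using hy i
  · rw [Fin.sum_univ_add]
    simp [hxs, hys]

end Stmt17Aux

/-- Lemma 6.2. If every rational `d`-polytope with edges of lattice length
`≥ l` is `4`-convex-normal, then every lattice `d`-polytope with edges of lattice length `≥ l`
is integrally closed. -/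
theorem statement17 (d : ℕ) (hd : 0 < d) (l : ℚ)
    (hyp : ∀ Q : Set (Pt d), IsRationalPolytope Q → polyDim Q = d →
      EdgeLengthsGE Q (l : ℝ) → ConvexNormal 4 Q) :
    ∀ P : Set (Pt d), IsLatticePolytope P → polyDim P = d →
      EdgeLengthsGE P (l : ℝ) → IntegrallyClosed P := by
  classical
  rintro P ⟨V, hV, hPV⟩ hdim hedge
  have key : ∀ m : ℕ, ∀ z ∈ (m : ℝ) • P, IsLatticePt z → Stmt17Aux.Decomp P m z := by
    intro m
    induction m using Nat.strong_induction_on with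
    | _ m ih =>
      intro z hz hzl
      by_cases hm0 : m = 0
      · subst hm0
        rw [Set.mem_smul_set] at hz
        obtain ⟨y, hy, rfl⟩ := hz
        exact ⟨Fin.elim0, fun i => i.elim0, by simp⟩
      by_cases hm1 : m = 1
      · subst hm1
        rw [Nat.cast_one, one_smul] at hz
        exact ⟨fun _ => z, fun _ => ⟨hz, hzl⟩, by simp⟩
      have hm : 2 ≤ m := by omega
      set L : ℕ := (m + 3) / 4 with hLdef
      have hL1 : 1 ≤ L := by omega
      have hL2 : 2 * L ≤ m := by omega
      have hL4 : m ≤ 4 * L := by omega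
      have hLm' : L ≤ m := by omega
      have haR0 : (0:ℝ) < (L:ℝ) := by exact_mod_cast hL1
      have haR : (L:ℝ) ≠ 0 := ne_of_gt haR0
      set Q : Set (Pt d) := (L:ℝ) • P with hQdef
      have hQrat : IsRationalPolytope Q := by
        refine ⟨V.image (fun v => (L:ℝ) • v), ?_, ?_⟩
        · intro v hv
          rw [Finset.mem_image] at hv
          obtain ⟨w, hw, rfl⟩ := hv
          intro i
          obtain ⟨n, hn⟩ := hV w hw i
          refine ⟨(L : ℚ) * (n : ℚ), ?_⟩
          push_cast
          simp [PiLp.smul_apply, hn, smul_eq_mul]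
        · rw [Finset.coe_image]
          have himg : (fun v => (L:ℝ) • v) '' (V : Set (Pt d)) = (L:ℝ) • (V : Set (Pt d)) := rfl
          rw [himg, convexHull_smul, ← hPV]
      have hQdim : polyDim Q = d := by
        simp only [polyDim] at hdim ⊢
        rw [hQdef, Stmt17Aux.vectorSpan_smul haR]
        exact hdim
      have hQedge : EdgeLengthsGE Q (l : ℝ) := by
        intro v' w' hE u t ht hu hcoord
        have haRinv : ((L:ℝ))⁻¹ ≠ 0 := inv_ne_zero haR
        have hE' : IsEdge P ((L:ℝ)⁻¹ • v') ((L:ℝ)⁻¹ • w') := by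
          constructor
          · intro hvw
            exact hE.1 (smul_right_injective (Pt d) haRinv hvw)
          · have h2 := Stmt17Aux.isExtreme_smul haRinv hE.2
            rw [Stmt17Aux.smul_segment'] at h2
            have hQ' : (L:ℝ)⁻¹ • Q = P := by
              rw [hQdef, smul_smul, inv_mul_cancel₀ haR, one_smul]
            rwa [hQ'] at h2
        have hcoord' : ∀ i, ((L:ℝ)⁻¹ • w') i - ((L:ℝ)⁻¹ • v') i = ((L:ℝ)⁻¹ * t) * (u i : ℝ) := by
          intro i
          simp only [PiLp.smul_apply, smul_eq_mul]
          rw [← mul_sub, hcoord i]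
          ring
        have hmain := hedge _ _ hE' u ((L:ℝ)⁻¹ * t) (by positivity) hu hcoord'
        calc (l:ℝ) ≤ (L:ℝ)⁻¹ * t := hmain
          _ ≤ t := by
            apply mul_le_of_le_one_left ht.le
            rw [inv_le_one₀ haR0]
            exact_mod_cast hL1
      have hCN := hyp Q hQrat hQdim hQedge
      set c' : ℚ := (m:ℚ)/(L:ℚ) with hc'def
      have hLQ0 : (0:ℚ) < (L:ℚ) := by exact_mod_cast hL1
      have hc2 : (2:ℚ) ≤ c' := by
        rw [hc'def, le_div_iff₀ hLQ0]
        exact_mod_cast hL2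
      have hc4 : c' ≤ 4 := by
        rw [hc'def, div_le_iff₀ hLQ0]
        exact_mod_cast hL4
      have hEq := hCN c' hc2 hc4
      have hcR : ((c' : ℚ) : ℝ) = (m : ℝ) / (L:ℝ) := by
        rw [hc'def]; push_cast; ring
      have hmem : z ∈ ((c':ℚ):ℝ) • Q := by
        rw [hQdef, smul_smul, hcR, div_mul_cancel₀ _ haR]
        exact hz
      rw [hEq] at hmem
      obtain ⟨v', hv', x, hx, hxl, p, hp, hzxp⟩ := hmem
      have hv'' : v' ∈ Set.extremePoints ℝ ((L:ℝ) • P) := by rwa [← hQdef]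
      have hvP : (L:ℝ)⁻¹ • v' ∈ Set.extremePoints ℝ P :=
        Stmt17Aux.mem_extremePoints_smul haR hv''
      set v : Pt d := (L:ℝ)⁻¹ • v' with hvdef
      have hvV : v ∈ (V : Set (Pt d)) := by
        rw [hPV] at hvP
        exact extremePoints_convexHull_subset hvP
      have hvlat : IsLatticePt v := hV v hvV
      have hv'eq : v' = (L:ℝ) • v := by rw [hvdef, smul_inv_smul₀ haR]
      have hkey : (((c':ℚ):ℝ) - 1) * (L:ℝ) = ((m - L : ℕ) : ℝ) := by
        rw [hcR, Nat.cast_sub hLm']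
        field_simp
      have hxP : x ∈ ((m - L : ℕ) : ℝ) • P := by
        rw [hQdef, smul_smul, hkey] at hx
        exact hx
      have hwlat : IsLatticePt (((m - L:ℕ):ℝ) • v) := Stmt17Aux.latt_nsmul _ hvlat
      have hsmul_v : (((c':ℚ):ℝ) - 1) • v' = ((m - L:ℕ):ℝ) • v := by
        rw [hv'eq, smul_smul, hkey]
      have hxlat : IsLatticePt x := by
        rw [hsmul_v] at hxl
        have h2 := Stmt17Aux.latt_add hxl hwlat
        simpa using h2
      have hplat : IsLatticePt p := by
        have hpz : p = z - x := by rw [hzxp]; abel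
        rw [hpz]
        exact Stmt17Aux.latt_sub hzl hxlat
      have hpQ : p ∈ ((L:ℕ):ℝ) • P := by rwa [hQdef] at hp
      have d1 := ih (m - L) (by omega) x hxP hxlat
      have d2 := ih L (by omega) p hpQ hplat
      have d3 := d1.add d2
      rw [show m - L + L = m from by omega, ← hzxp] at d3
      exact d3
  intro c _ z hz hzl
  exact key c z hz hzl
end
end
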